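/- Let m ≥ 1. For every j ∈ {2, …, m} and every ζ ∈ 𝔽₂^m one has c(τ^P_j(ζ)) = c(ζ) and (τ^P_j(ζ))_1 = ζ_1; consequently both the first coordinate ζ_1 and the block count c(ζ) are constant on each Γ_P-orbit. -/

import Mathlib

open scoped Classical

noncomputable section

/-- The `i`-th coordinate (1-indexed) of `ζ ∈ 𝔽₂^m`, interpreted as `0` for `i` out of range. -/
def padP {m : ℕ} (ζ : Fin m → ZMod 2) (i : ℕ) : ZMod 2 :=
  if h : 1 ≤ i ∧ i ≤ m then ζ ⟨i - 1, by omega⟩ else 0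

/-- The transvection `τ^P_j(ζ) = ζ + (ζ_{j-1} + ζ_{j+1}) e_j`. -/
def tauP (m j : ℕ) (ζ : Fin m → ZMod 2) : Fin m → ZMod 2 :=
  fun k => if (k : ℕ) + 1 = j then ζ k + (padP ζ (j - 1) + padP ζ (j + 1)) else ζ k

/-- The group `Γ_P`, generated by the transvections `τ^P_j`, `2 ≤ j ≤ m`. -/
def GammaP (m : ℕ) : Subgroup (Equiv.Perm (Fin m → ZMod 2)) :=
  Subgroup.closure {g | ∃ j, 2 ≤ j ∧ j ≤ m ∧ ⇑g = tauP m j}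

/-- The number of maximal blocks of consecutive 1's in `(ζ_1, …, ζ_m)`:
we count the positions where a block starts. -/
def blockCount {m : ℕ} (ζ : Fin m → ZMod 2) : ℕ :=
  ((Finset.Icc 1 m).filter (fun i => padP ζ i = 1 ∧ padP ζ (i - 1) = 0)).card

lemma padP_tauP_ne {m j : ℕ} (ζ : Fin m → ZMod 2) (i : ℕ) (hi : i ≠ j) :
    padP (tauP m j ζ) i = padP ζ i := by
  unfold padP tauP
  split
  · next h =>
    rw [if_neg]
    show ¬(i - 1 + 1 = j)
    omega
  · rfl

lemma padP_tauP_self {m j : ℕ} (hj2 : 2 ≤ j) (hjm : j ≤ m) (ζ : Fin m → ZMod 2) :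
    padP (tauP m j ζ) j = padP ζ j + (padP ζ (j - 1) + padP ζ (j + 1)) := by
  unfold padP tauP
  have hc : ((⟨j - 1, by omega⟩ : Fin m) : ℕ) + 1 = j := by
    show j - 1 + 1 = j; omega
  rw [dif_pos ⟨by omega, hjm⟩, dif_pos ⟨by omega, hjm⟩, if_pos hc]
  unfold padP
  rfl

lemma blockCount_eq_sum {m : ℕ} (ζ : Fin m → ZMod 2) :
    blockCount ζ = ∑ i ∈ Finset.Icc 1 (m+1),
      if padP ζ i = 1 ∧ padP ζ (i-1) = 0 then 1 else 0 := by
  rw [blockCount, Finset.card_filter]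
  have hins : Finset.Icc 1 (m+1) = insert (m+1) (Finset.Icc 1 m) := by
    ext x; simp [Finset.mem_Icc]; omega
  rw [hins, Finset.sum_insert (by simp)]
  have h0 : padP ζ (m+1) = 0 := by unfold padP; rw [dif_neg]; omega
  simp [h0]

lemma key_zmod : ∀ a b x : ZMod 2,
    ((if x + (a + b) = 1 ∧ a = 0 then 1 else 0) +
      (if b = 1 ∧ x + (a + b) = 0 then 1 else 0) : ℕ) =
    (if x = 1 ∧ a = 0 then 1 else 0) + (if b = 1 ∧ x = 0 then 1 else 0) := by decide

lemma tauP_blockCount {m j : ℕ} (hj2 : 2 ≤ j) (hjm : j ≤ m) (ζ : Fin m → ZMod 2) :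
    blockCount (tauP m j ζ) = blockCount ζ := by
  rw [blockCount_eq_sum, blockCount_eq_sum]
  have hsub : ({j, j+1} : Finset ℕ) ⊆ Finset.Icc 1 (m+1) := by
    intro x hx
    simp only [Finset.mem_insert, Finset.mem_singleton] at hx
    simp only [Finset.mem_Icc]; omega
  rw [← Finset.sum_sdiff hsub, ← Finset.sum_sdiff hsub]
  congr 1
  · apply Finset.sum_congr rfl
    intro i hi
    simp only [Finset.mem_sdiff, Finset.mem_insert, Finset.mem_singleton,
      Finset.mem_Icc, not_or] at hi
    rw [padP_tauP_ne ζ i (by omega), padP_tauP_ne ζ (i-1) (by omega)]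
  · rw [Finset.sum_pair (by omega), Finset.sum_pair (by omega)]
    rw [padP_tauP_self hj2 hjm ζ, padP_tauP_ne ζ (j-1) (by omega),
      padP_tauP_ne ζ (j+1) (by omega)]
    have h1 : j + 1 - 1 = j := by omega
    rw [h1, padP_tauP_self hj2 hjm ζ]
    exact key_zmod (padP ζ (j-1)) (padP ζ (j+1)) (padP ζ j)

lemma tauP_first {m j : ℕ} (hj2 : 2 ≤ j) (ζ : Fin m → ZMod 2) :
    padP (tauP m j ζ) 1 = padP ζ 1 :=
  padP_tauP_ne ζ 1 (by omega)

theorem blockCount_and_first_coord_invariant (m : ℕ) (hm : 1 ≤ m) :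
    (∀ j, 2 ≤ j → j ≤ m → ∀ ζ : Fin m → ZMod 2,
      blockCount (tauP m j ζ) = blockCount ζ ∧ padP (tauP m j ζ) 1 = padP ζ 1) ∧
    (∀ g ∈ GammaP m, ∀ ζ : Fin m → ZMod 2,
      blockCount (g ζ) = blockCount ζ ∧ padP (g ζ) 1 = padP ζ 1) := by
  have hgen : ∀ j, 2 ≤ j → j ≤ m → ∀ ζ : Fin m → ZMod 2,
      blockCount (tauP m j ζ) = blockCount ζ ∧ padP (tauP m j ζ) 1 = padP ζ 1 :=
    fun j hj2 hjm ζ => ⟨tauP_blockCount hj2 hjm ζ, tauP_first hj2 ζ⟩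
  refine ⟨hgen, ?_⟩
  intro g hg
  induction hg using Subgroup.closure_induction with
  | mem g hgmem =>
    obtain ⟨j, hj2, hjm, hgeq⟩ := hgmem
    intro ζ
    rw [hgeq]
    exact hgen j hj2 hjm ζ
  | one => intro ζ; simp
  | mul g h _ _ ihg ihh =>
    intro ζ
    have h1 := ihh ζ
    have h2 := ihg (h ζ)
    simp only [Equiv.Perm.mul_apply]
    exact ⟨h2.1.trans h1.1, h2.2.trans h1.2⟩
  | inv g _ ihg =>
    intro ζ
    have := ihg (g⁻¹ ζ)
    rw [show g (g⁻¹ ζ) = ζ from g.apply_symm_apply ζ] at this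
    exact ⟨this.1.symm, this.2.symm⟩
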